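/- For every z in the unit sphere S^{2m−1} ⊂ ℂ^m: ⟨[Y_{m−1}, W_{m−1}](z), X(z)⟩ = −2·|z_{m−1}|²·|z_m|²·θ_{m−1}·θ_m·(|z_{m−1}|² + |z_m|²). -/

import Mathlib

open scoped BigOperators ComplexConjugate

/-- The real inner product on `ℂ^m`: `⟨v,w⟩ = Re ∑_k v_k · conj (w_k)`. -/
noncomputable def rinner {m : ℕ} (v w : Fin m → ℂ) : ℝ :=
  (∑ k : Fin m, v k * conj (w k)).re

/-- The vector field `X(z) = (iθ₁z₁,…,iθ_m z_m)` generating the flow. -/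
noncomputable def sphX {m : ℕ} (θ : Fin m → ℝ) (z : Fin m → ℂ) : Fin m → ℂ :=
  fun k => Complex.I * (θ k : ℂ) * z k

/-- The vector field `Y_l` (here `l` is a 0-based index; the paper's `Y_l` for
`1 ≤ l ≤ m−1` corresponds to indices `l` with `(l:ℕ)+1 < m`): its components are `0` below `l`,
`−(∑_{k>l}|z_k|²)·z_l` at `l`, and `|z_l|²·z_k` above `l`. -/
noncomputable def sphY {m : ℕ} (l : Fin m) (z : Fin m → ℂ) : Fin m → ℂ := fun k =>
  if (k : ℕ) < (l : ℕ) then 0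
  else if k = l then
    -(((∑ j ∈ Finset.univ.filter (fun j : Fin m => (l : ℕ) < (j : ℕ)), ‖z j‖ ^ 2 : ℝ) : ℂ)) * z l
  else ((‖z l‖ ^ 2 : ℝ) : ℂ) * z k

/-- The generic vector field `W_p` (0-based index `p`; the paper's `W_p` for `1 ≤ p ≤ m−2`
corresponds to indices `p` with `(p:ℕ)+2 < m`): components `0` below `p`,
`−(∑_{k>p}θ_k²|z_k|²)·i z_p` at `p`, and `θ_p θ_k |z_p|²·i z_k` above `p`. -/
noncomputable def sphW {m : ℕ} (θ : Fin m → ℝ) (p : Fin m) (z : Fin m → ℂ) : Fin m → ℂ := fun k =>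
  if (k : ℕ) < (p : ℕ) then 0
  else if k = p then
    -(((∑ j ∈ Finset.univ.filter (fun j : Fin m => (p : ℕ) < (j : ℕ)),
        (θ j) ^ 2 * ‖z j‖ ^ 2 : ℝ) : ℂ)) * (Complex.I * z p)
  else (((θ p) * (θ k) * ‖z p‖ ^ 2 : ℝ) : ℂ) * (Complex.I * z k)

/-- The special last vector field `W_{m−1}`, with `a` the index `m−2` and `b` the index `m−1`
(0-based): component `−θ_b|z_b|²·i z_a` at `a`, `θ_a|z_a|²·i z_b` at `b`, and `0` elsewhere. -/
noncomputable def sphWlast {m : ℕ} (θ : Fin m → ℝ) (a b : Fin m) (z : Fin m → ℂ) :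
    Fin m → ℂ := fun k =>
  if k = a then -(((θ b * ‖z b‖ ^ 2 : ℝ)) : ℂ) * (Complex.I * z a)
  else if k = b then (((θ a * ‖z a‖ ^ 2 : ℝ)) : ℂ) * (Complex.I * z b)
  else 0

/-- The full family `W_p`, `1 ≤ p ≤ m−1` (0-based: `(p:ℕ)+1 < m`): the generic `W_p` for
`p ≤ m−2` and the special `W_{m−1}` for the last index. -/
noncomputable def sphWfull {m : ℕ} (hm : 2 ≤ m) (θ : Fin m → ℝ) (p : Fin m) :
    (Fin m → ℂ) → (Fin m → ℂ) :=
  if (p : ℕ) = m - 2 then sphWlast θ ⟨m - 2, by omega⟩ ⟨m - 1, by omega⟩ else sphW θ p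

/-- The Lie bracket `[U,V](z) = (DV)_z(U(z)) − (DU)_z(V(z))` of vector fields on `ℂ^m`,
`D` being the Fréchet derivative over `ℝ`. -/
noncomputable def bracket {m : ℕ} (U V : (Fin m → ℂ) → (Fin m → ℂ)) (z : Fin m → ℂ) :
    Fin m → ℂ :=
  fderiv ℝ V z (U z) - fderiv ℝ U z (V z)

private lemma hasD_aux {m : ℕ} (c : ℂ) (i k : Fin m) (z : Fin m → ℂ) :
    ∃ L : (Fin m → ℂ) →L[ℝ] ℂ,
      HasFDerivAt (fun w : Fin m → ℂ => c * ((w i * conj (w i)) * w k)) L z ∧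
      ∀ v, L v = c * ((z i * conj (z i)) * v k
        + (v i * conj (z i) + z i * conj (v i)) * z k) := by
  have hi : HasFDerivAt (fun w : Fin m → ℂ => w i)
      (ContinuousLinearMap.proj (R := ℝ) i) z := hasFDerivAt_apply i z
  have hk : HasFDerivAt (fun w : Fin m → ℂ => w k)
      (ContinuousLinearMap.proj (R := ℝ) k) z := hasFDerivAt_apply k z
  have hci : HasFDerivAt (fun w : Fin m → ℂ => conj (w i))
      ((Complex.conjCLE.toContinuousLinearMap).comp (ContinuousLinearMap.proj (R := ℝ) i)) z :=
    (Complex.conjCLE.toContinuousLinearMap.hasFDerivAt).comp z hi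
  refine ⟨_, ((hi.mul hci).mul hk).const_mul c, fun v => ?_⟩
  simp [ContinuousLinearMap.add_apply, ContinuousLinearMap.smul_apply,
    ContinuousLinearMap.comp_apply, ContinuousLinearMap.proj_apply,
    Complex.conjCLE_apply, smul_eq_mul]
  ring

private lemma hconj_aux (w : ℂ) : ((‖w‖ ^ 2 : ℝ) : ℂ) = w * conj w := by
  rw [Complex.sq_norm]
  exact (Complex.mul_conj w).symm

private lemma aux15 {m : ℕ} (θ : Fin m → ℝ) (a b : Fin m)
    (hab : (a : ℕ) + 1 = (b : ℕ)) (hbm : (b : ℕ) + 1 = m) (z : Fin m → ℂ) :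
    rinner (bracket (sphY a) (sphWlast θ a b) z) (sphX θ z)
      = -2 * ‖z a‖ ^ 2 * ‖z b‖ ^ 2 * θ a * θ b * (‖z a‖ ^ 2 + ‖z b‖ ^ 2) := by
  have hne : a ≠ b := Fin.ne_of_val_ne (by omega)
  -- nice forms
  have hY : sphY a = fun (w : Fin m → ℂ) k =>
      if k = a then (-1 : ℂ) * ((w b * conj (w b)) * w a)
      else if k = b then (1 : ℂ) * ((w a * conj (w a)) * w b) else 0 := by
    funext w k
    have hk := k.isLt
    simp only [sphY]
    by_cases h1 : (k : ℕ) < (a : ℕ)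
    · have ha' : k ≠ a := Fin.ne_of_val_ne (by omega)
      have hb' : k ≠ b := Fin.ne_of_val_ne (by omega)
      rw [if_pos h1, if_neg ha', if_neg hb']
    · by_cases h2 : k = a
      · have hfil : Finset.univ.filter (fun j : Fin m => (a : ℕ) < (j : ℕ)) = {b} := by
          ext j
          have := j.isLt
          simp only [Finset.mem_filter, Finset.mem_univ, true_and, Finset.mem_singleton,
            Fin.ext_iff]
          omega
        rw [if_neg h1, if_pos h2, if_pos h2, hfil, Finset.sum_singleton, hconj_aux]
        ring
      · have hb' : k = b := Fin.eq_of_val_eq (by omega)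
        rw [if_neg h1, if_neg h2, if_neg h2, if_pos hb', hconj_aux, hb']
        ring
  have hW : sphWlast θ a b = fun (w : Fin m → ℂ) k =>
      if k = a then ((-(θ b : ℂ)) * Complex.I) * ((w b * conj (w b)) * w a)
      else if k = b then (((θ a : ℂ)) * Complex.I) * ((w a * conj (w a)) * w b) else 0 := by
    funext w k
    simp only [sphWlast]
    by_cases h2 : k = a
    · rw [if_pos h2, if_pos h2, Complex.ofReal_mul, hconj_aux]
      ring
    · by_cases h3 : k = b
      · rw [if_neg h2, if_neg h2, if_pos h3, if_pos h3, Complex.ofReal_mul, hconj_aux]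
        ring
      · rw [if_neg h2, if_neg h2, if_neg h3, if_neg h3]
  -- derivatives componentwise
  have hYd : ∀ k : Fin m, ∃ L : (Fin m → ℂ) →L[ℝ] ℂ,
      HasFDerivAt (fun w : Fin m → ℂ =>
        if k = a then (-1 : ℂ) * ((w b * conj (w b)) * w a)
        else if k = b then (1 : ℂ) * ((w a * conj (w a)) * w b) else 0) L z ∧
      ∀ v, L v =
        if k = a then (-1 : ℂ) * ((z b * conj (z b)) * v a
            + (v b * conj (z b) + z b * conj (v b)) * z a)
        else if k = b then (1 : ℂ) * ((z a * conj (z a)) * v b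
            + (v a * conj (z a) + z a * conj (v a)) * z b) else 0 := by
    intro k
    by_cases h2 : k = a
    · obtain ⟨L, h1, h2'⟩ := hasD_aux (-1 : ℂ) b a z
      exact ⟨L, by simpa [h2] using h1, fun v => by simp [h2, h2' v]⟩
    · by_cases h3 : k = b
      · obtain ⟨L, h1, h2'⟩ := hasD_aux (1 : ℂ) a b z
        exact ⟨L, by simpa [h2, h3, hne.symm] using h1, fun v => by simp [h2, h3, hne.symm, h2' v]⟩
      · exact ⟨0, by simpa [h2, h3] using hasFDerivAt_const (0 : ℂ) z,
          fun v => by simp [h2, h3]⟩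
  have hWd : ∀ k : Fin m, ∃ L : (Fin m → ℂ) →L[ℝ] ℂ,
      HasFDerivAt (fun w : Fin m → ℂ =>
        if k = a then ((-(θ b : ℂ)) * Complex.I) * ((w b * conj (w b)) * w a)
        else if k = b then (((θ a : ℂ)) * Complex.I) * ((w a * conj (w a)) * w b) else 0) L z ∧
      ∀ v, L v =
        if k = a then ((-(θ b : ℂ)) * Complex.I) * ((z b * conj (z b)) * v a
            + (v b * conj (z b) + z b * conj (v b)) * z a)
        else if k = b then (((θ a : ℂ)) * Complex.I) * ((z a * conj (z a)) * v b
            + (v a * conj (z a) + z a * conj (v a)) * z b) else 0 := by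
    intro k
    by_cases h2 : k = a
    · obtain ⟨L, h1, h2'⟩ := hasD_aux ((-(θ b : ℂ)) * Complex.I) b a z
      exact ⟨L, by simpa [h2] using h1, fun v => by simp [h2, h2' v]⟩
    · by_cases h3 : k = b
      · obtain ⟨L, h1, h2'⟩ := hasD_aux (((θ a : ℂ)) * Complex.I) a b z
        exact ⟨L, by simpa [h2, h3, hne.symm] using h1, fun v => by simp [h2, h3, hne.symm, h2' v]⟩
      · exact ⟨0, by simpa [h2, h3] using hasFDerivAt_const (0 : ℂ) z,
          fun v => by simp [h2, h3]⟩
  choose LY hLY1 hLY2 using hYd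
  choose LW hLW1 hLW2 using hWd
  have hfY : fderiv ℝ (sphY a) z = ContinuousLinearMap.pi LY := by
    rw [hY]
    exact (hasFDerivAt_pi.2 hLY1).fderiv
  have hfW : fderiv ℝ (sphWlast θ a b) z = ContinuousLinearMap.pi LW := by
    rw [hW]
    exact (hasFDerivAt_pi.2 hLW1).fderiv
  -- the bracket
  have hbr : ∀ k, bracket (sphY a) (sphWlast θ a b) z k
      = LW k (sphY a z) - LY k (sphWlast θ a b z) := by
    intro k
    simp [bracket, hfY, hfW, ContinuousLinearMap.pi_apply]
  have hzero : ∀ k : Fin m, k ≠ a → k ≠ b →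
      bracket (sphY a) (sphWlast θ a b) z k * conj (sphX θ z k) = 0 := by
    intro k h2 h3
    rw [hbr k, hLY2, hLW2]
    simp [h2, h3]
  have hsum : ∑ k : Fin m, bracket (sphY a) (sphWlast θ a b) z k * conj (sphX θ z k)
      = ∑ k ∈ ({a, b} : Finset (Fin m)),
          bracket (sphY a) (sphWlast θ a b) z k * conj (sphX θ z k) := by
    refine (Finset.sum_subset (Finset.subset_univ {a, b}) ?_).symm
    intro x _ hx
    simp only [Finset.mem_insert, Finset.mem_singleton, not_or] at hx
    exact hzero x hx.1 hx.2
  rw [rinner, hsum, Finset.sum_pair hne, hbr a, hbr b, hLY2 a, hLY2 b, hLW2 a, hLW2 b, hY, hW]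
  simp only [if_pos rfl, if_neg hne, if_neg hne.symm, sphX]
  rw [← Complex.ofReal_re (-2 * ‖z a‖ ^ 2 * ‖z b‖ ^ 2 * θ a * θ b * (‖z a‖ ^ 2 + ‖z b‖ ^ 2))]
  congr 1
  push_cast
  rw [show ((‖z a‖ : ℂ)) ^ 2 = z a * conj (z a) by
        rw [← Complex.ofReal_pow]; exact hconj_aux (z a),
      show ((‖z b‖ : ℂ)) ^ 2 = z b * conj (z b) by
        rw [← Complex.ofReal_pow]; exact hconj_aux (z b)]
  simp only [map_mul, map_neg, map_one, Complex.conj_I, Complex.conj_ofReal, Complex.conj_conj]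
  ring_nf
  simp only [Complex.I_sq]
  ring

/-- For `z` on the unit sphere,
`⟨[Y_{m−1}, W_{m−1}](z), X(z)⟩ = −2|z_{m−1}|²|z_m|²θ_{m−1}θ_m(|z_{m−1}|²+|z_m|²)`
(0-based: `a = m−2`, `b = m−1`). -/
theorem stmt15 {m : ℕ} (hm : 2 ≤ m) (θ : Fin m → ℝ) (hθ1 : θ ⟨0, by omega⟩ = 1)
    (hmono : Monotone θ) (z : Fin m → ℂ) (hz : ∑ k : Fin m, ‖z k‖ ^ 2 = 1) :
    rinner
        (bracket (sphY ⟨m - 2, by omega⟩)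
          (sphWlast θ ⟨m - 2, by omega⟩ ⟨m - 1, by omega⟩) z)
        (sphX θ z)
      = -2 * ‖z ⟨m - 2, by omega⟩‖ ^ 2 * ‖z ⟨m - 1, by omega⟩‖ ^ 2
          * θ ⟨m - 2, by omega⟩ * θ ⟨m - 1, by omega⟩
          * (‖z ⟨m - 2, by omega⟩‖ ^ 2 + ‖z ⟨m - 1, by omega⟩‖ ^ 2) :=
  aux15 θ ⟨m - 2, by omega⟩ ⟨m - 1, by omega⟩ (show m - 2 + 1 = m - 1 by omega)
    (show m - 1 + 1 = m by omega) z
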